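/- Newton's inequality: if a_0, a_1, ..., a_n are real numbers such that all zeros of the polynomial P(x) = Σ_{i=0}^n a_i x^i are real, then for 1 ≤ i ≤ n-1 one has a_i^2 ≥ (1 + 1/i)(1 + 1/(n-i)) · a_{i+1} a_{i-1}. -/

import Mathlib

open Finset

open Polynomial

private lemma newton_splits_derivative {p : ℝ[X]} (hp : p.Splits) :
    (derivative p).Splits := by
  rcases eq_or_ne (derivative p) 0 with h0 | h0
  · rw [h0]; exact Splits.zero
  · rw [splits_iff_card_roots]
    have h1 : Multiset.card p.roots = p.natDegree := splits_iff_card_roots.mp hp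
    have h2 := p.card_roots_le_derivative
    have h3 : Multiset.card (derivative p).roots ≤ (derivative p).natDegree := card_roots' _
    have h4 : (derivative p).natDegree ≤ p.natDegree - 1 := natDegree_derivative_le p
    have h5 : p.natDegree ≠ 0 := by
      intro h
      exact h0 (by rw [eq_C_of_natDegree_eq_zero h, derivative_C])
    omega

private lemma newton_splits_reverse {p : ℝ[X]} (hp : p.Splits) :
    p.reverse.Splits := by
  rcases eq_or_ne p 0 with rfl | h0
  · simpa [reverse_zero] using Splits.zero
  obtain ⟨s, hs⟩ := splits_iff_exists_multiset.mp hp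
  rw [hs, reverse_mul_of_domain]
  clear hs h0 hp
  apply Splits.mul
  · rw [reverse_C]; exact Splits.C _
  · induction s using Multiset.induction with
    | empty =>
      simpa using Splits.of_natDegree_le_one
        (le_trans (reverse_natDegree_le _) (by simp))
    | cons r s ih =>
      rw [Multiset.map_cons, Multiset.prod_cons, reverse_mul_of_domain]
      refine Splits.mul ?_ ih
      exact Splits.of_natDegree_le_one
        (le_trans (reverse_natDegree_le _) (by simp [natDegree_X_sub_C]))

private lemma newton_splits_reflect {p : ℝ[X]} {N : ℕ} (hN : p.natDegree ≤ N)
    (hp : p.Splits) : (p.reflect N).Splits := by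
  have h : p.reflect N = p.reverse * X ^ (N - p.natDegree) := by
    have h2 := reflect_mul p 1 (le_refl p.natDegree)
      (by simp : (1 : ℝ[X]).natDegree ≤ N - p.natDegree)
    rw [mul_one, reflect_one] at h2
    have h3 : p.natDegree + (N - p.natDegree) = N := by omega
    rw [h3] at h2
    exact h2
  rw [h]
  exact Splits.mul (newton_splits_reverse hp) (Splits.X_pow _)

private lemma newton_splits_of_roots_real {p : ℝ[X]}
    (h : ∀ z : ℂ, (p.map (algebraMap ℝ ℂ)).IsRoot z → z.im = 0) :
    p.Splits := by
  rcases eq_or_ne p 0 with rfl | h0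
  · exact Splits.zero
  have hinj : Function.Injective (algebraMap ℝ ℂ) := (algebraMap ℝ ℂ).injective
  have hmap : p.map (algebraMap ℝ ℂ) ≠ 0 := (Polynomial.map_ne_zero_iff hinj).mpr h0
  rw [splits_iff_card_roots]
  have hC : Multiset.card (p.map (algebraMap ℝ ℂ)).roots = p.natDegree := by
    rw [splits_iff_card_roots.mp (IsAlgClosed.splits (p.map (algebraMap ℝ ℂ))),
      natDegree_map_eq_of_injective hinj]
  have hle : (p.map (algebraMap ℝ ℂ)).roots ≤ p.roots.map (algebraMap ℝ ℂ) := by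
    rw [Multiset.le_iff_count]
    intro z
    by_cases hz : z ∈ (p.map (algebraMap ℝ ℂ)).roots
    · have hz0 : z.im = 0 := h z (isRoot_of_mem_roots hz)
      have hzr : algebraMap ℝ ℂ z.re = z := by
        apply Complex.ext <;> simp [hz0]
      rw [← hzr, Multiset.count_map_eq_count' _ _ hinj, count_roots, count_roots,
        eq_rootMultiplicity_map hinj]
    · rw [Multiset.count_eq_zero_of_notMem hz]
      exact Nat.zero_le _
  have h1 : Multiset.card p.roots ≤ p.natDegree := card_roots' _
  have h2 := Multiset.card_le_card hle
  rw [Multiset.card_map] at h2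
  omega
private lemma newton_discrim {q : ℝ[X]} (hq : q.Splits)
    (hdeg : q.natDegree ≤ 2) :
    4 * (q.coeff 0 * q.coeff 2) ≤ (q.coeff 1) ^ 2 := by
  rcases eq_or_ne (q.coeff 2) 0 with h2 | h2
  · rw [h2]; nlinarith [sq_nonneg (q.coeff 1)]
  · have hne : q ≠ 0 := fun h => h2 (by simp [h])
    have hdeg2 : q.natDegree = 2 :=
      le_antisymm hdeg (le_natDegree_of_ne_zero h2)
    have hq0 : q.degree ≠ 0 := by
      rw [degree_eq_natDegree hne, hdeg2]
      decide
    obtain ⟨r, hr⟩ := hq.exists_eval_eq_zero hq0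
    replace hr : q.eval r = 0 := hr
    have he : q.coeff 0 + q.coeff 1 * r + q.coeff 2 * r ^ 2 = 0 := by
      have h3 := eval_eq_sum_range' (show q.natDegree < 3 by omega) r
      rw [hr] at h3
      simp [Finset.sum_range_succ] at h3
      linarith [h3]
    have h4 : 4 * q.coeff 2 * (q.coeff 0 + q.coeff 1 * r + q.coeff 2 * r ^ 2) = 0 := by
      rw [he]; ring
    nlinarith [sq_nonneg (2 * q.coeff 2 * r + q.coeff 1), h4]

private lemma newton_desc1 (m : ℕ) :
    (m + 1).descFactorial m = (m + 1) * m.descFactorial m := by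
  induction m with
  | zero => rfl
  | succ m ih =>
    rw [Nat.succ_descFactorial_succ, ih, Nat.descFactorial_self, Nat.descFactorial_self,
      Nat.factorial_succ]

private lemma newton_desc2 (m : ℕ) :
    2 * (m + 2).descFactorial m = (m + 2) * (m + 1).descFactorial m := by
  induction m with
  | zero => rfl
  | succ m ih =>
    have h1 : m + 1 + 2 = (m + 2) + 1 := by omega
    rw [h1, Nat.succ_descFactorial_succ, Nat.succ_descFactorial_succ, newton_desc1]
    rw [newton_desc1] at ih
    nlinarith [ih]

/-- Newton's inequality. -/
theorem newton_inequality (n : ℕ) (a : ℕ → ℝ)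
    (hreal : ∀ z : ℂ, (∑ i ∈ range (n + 1), (a i : ℂ) * z ^ i) = 0 → z.im = 0) :
    ∀ i, 1 ≤ i → i ≤ n - 1 →
      (1 + 1 / (i : ℝ)) * (1 + 1 / ((n - i : ℕ) : ℝ)) * (a (i + 1) * a (i - 1)) ≤ (a i) ^ 2 := by
  intro i hi1 hi2
  obtain ⟨k, rfl⟩ : ∃ k, i = k + 1 := ⟨i - 1, by omega⟩
  obtain ⟨m, rfl⟩ : ∃ m, n = k + m + 2 := ⟨n - k - 2, by omega⟩
  set P : ℝ[X] := ∑ j ∈ range (k + m + 3), C (a j) * X ^ j with hP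
  have coeffP : ∀ j, j < k + m + 3 → P.coeff j = a j := by
    intro j hj
    rw [hP, finset_sum_coeff]
    rw [Finset.sum_eq_single j]
    · simp
    · intro b _ hbj
      simp [coeff_C_mul, coeff_X_pow, Ne.symm hbj]
    · intro hj'
      exact absurd (mem_range.mpr hj) hj'
  have hPdeg : P.natDegree ≤ k + m + 2 := by
    apply natDegree_sum_le_of_forall_le
    intro j hj
    refine (natDegree_C_mul_le _ _).trans ?_
    rw [natDegree_X_pow]
    exact Nat.lt_succ_iff.mp (mem_range.mp hj)
  have hsplits : P.Splits := by
    apply newton_splits_of_roots_real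
    intro z hz
    apply hreal z
    have hev : (P.map (algebraMap ℝ ℂ)).eval z
        = ∑ j ∈ range (k + m + 3), (a j : ℂ) * z ^ j := by
      rw [hP]
      simp [Polynomial.map_sum, Polynomial.eval_finset_sum]
    have : k + m + 2 + 1 = k + m + 3 := rfl
    rw [this, ← hev]
    exact hz
  have iter_splits : ∀ (j : ℕ) (p : ℝ[X]), p.Splits →
      (derivative^[j] p).Splits := by
    intro j
    induction j with
    | zero => intro p hp; simpa using hp
    | succ j ih =>
      intro p hp
      rw [Function.iterate_succ_apply']
      exact newton_splits_derivative (ih p hp)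
  set Q : ℝ[X] := derivative^[k] P with hQ
  have hQdeg : Q.natDegree ≤ m + 2 := by
    have h := natDegree_iterate_derivative P k
    rw [← hQ] at h
    omega
  set R : ℝ[X] := Q.reflect (m + 2) with hR
  have hRdeg : R.natDegree ≤ m + 2 := by
    apply natDegree_le_iff_coeff_eq_zero.mpr
    intro N hN
    rw [hR, coeff_reflect, revAt_eq_self_of_lt hN]
    exact coeff_eq_zero_of_natDegree_lt (by omega)
  set S : ℝ[X] := derivative^[m] R with hS
  have hSdeg : S.natDegree ≤ 2 := by
    have h := natDegree_iterate_derivative R m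
    rw [← hS] at h
    omega
  have hSsplits : S.Splits :=
    iter_splits m R (newton_splits_reflect hQdeg (iter_splits k P hsplits))
  -- coefficients
  have hQc : ∀ t, t ≤ 2 → Q.coeff t = ((t + k).descFactorial k : ℝ) * a (t + k) := by
    intro t ht
    rw [hQ, coeff_iterate_derivative, coeffP (t + k) (by omega), nsmul_eq_mul]
  have hSc : ∀ j, j ≤ 2 →
      S.coeff j = ((j + m).descFactorial m : ℝ)
        * (((2 - j + k).descFactorial k : ℝ) * a (2 - j + k)) := by
    intro j hj
    rw [hS, coeff_iterate_derivative, hR, coeff_reflect, revAt_le (by omega : j + m ≤ m + 2)]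
    have h1 : m + 2 - (j + m) = 2 - j := by omega
    rw [h1, hQc (2 - j) (by omega), nsmul_eq_mul]
  have hquad := newton_discrim hSsplits hSdeg
  rw [hSc 0 (by omega), hSc 1 (by omega), hSc 2 (by omega)] at hquad
  -- numeric cleanup
  have e0 : (0 : ℕ) + m = m := by omega
  have e1 : (1 : ℕ) + m = m + 1 := by omega
  have e2 : (2 : ℕ) + m = m + 2 := by omega
  have f0 : 2 - (0:ℕ) + k = k + 2 := by omega
  have f1 : 2 - (1:ℕ) + k = k + 1 := by omega
  have f2 : 2 - (2:ℕ) + k = k := by omega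
  rw [e0, e1, e2, f0, f1, f2] at hquad
  set dm0 : ℝ := (m.descFactorial m : ℝ) with hdm0
  set dm1 : ℝ := ((m + 1).descFactorial m : ℝ) with hdm1
  set dm2 : ℝ := ((m + 2).descFactorial m : ℝ) with hdm2
  set dk0 : ℝ := (k.descFactorial k : ℝ) with hdk0
  set dk1 : ℝ := ((k + 1).descFactorial k : ℝ) with hdk1
  set dk2 : ℝ := ((k + 2).descFactorial k : ℝ) with hdk2
  have rm1 : dm1 = ((m : ℝ) + 1) * dm0 := by
    rw [hdm1, hdm0, newton_desc1]; push_cast; ring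
  have rm2 : 2 * dm2 = ((m : ℝ) + 2) * dm1 := by
    rw [hdm2, hdm1, ← Nat.cast_ofNat, ← Nat.cast_mul, newton_desc2]; push_cast; ring
  have rk1 : dk1 = ((k : ℝ) + 1) * dk0 := by
    rw [hdk1, hdk0, newton_desc1]; push_cast; ring
  have rk2 : 2 * dk2 = ((k : ℝ) + 2) * dk1 := by
    rw [hdk2, hdk1, ← Nat.cast_ofNat, ← Nat.cast_mul, newton_desc2]; push_cast; ring
  have pm0 : (0 : ℝ) < dm0 := by
    rw [hdm0, Nat.descFactorial_self]; exact_mod_cast Nat.factorial_pos m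
  have pk0 : (0 : ℝ) < dk0 := by
    rw [hdk0, Nat.descFactorial_self]; exact_mod_cast Nat.factorial_pos k
  have pm1 : (0 : ℝ) < dm1 := by rw [rm1]; positivity
  have pk1 : (0 : ℝ) < dk1 := by rw [rk1]; positivity
  set E : ℝ := dm1 * dk1 * dm0 * dk0 with hE
  have hEpos : 0 < E := by rw [hE]; positivity
  have step1 : (dm1 * (dk1 * a (k + 1))) ^ 2
      = E * (((m : ℝ) + 1) * ((k : ℝ) + 1) * a (k + 1) ^ 2) := by
    rw [hE]
    linear_combination (dm1 * dk1 * a (k + 1) ^ 2 * dm1) * rk1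
      + (dm1 * dk1 * a (k + 1) ^ 2 * ((k : ℝ) + 1) * dk0) * rm1
  have step2 : 4 * (dm0 * (dk2 * a (k + 2)) * (dm2 * (dk0 * a k)))
      = E * (((m : ℝ) + 2) * ((k : ℝ) + 2) * (a (k + 2) * a k)) := by
    rw [hE]
    linear_combination (dm0 * dk0 * a (k + 2) * a k * 2 * dm2) * rk2
      + (dm0 * dk0 * a (k + 2) * a k * ((k : ℝ) + 2) * dk1) * rm2
  rw [step1, step2] at hquad
  have h3 : ((m : ℝ) + 2) * ((k : ℝ) + 2) * (a (k + 2) * a k)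
      ≤ ((m : ℝ) + 1) * ((k : ℝ) + 1) * a (k + 1) ^ 2 :=
    le_of_mul_le_mul_left hquad hEpos
  -- final arithmetic
  have hsub : k + m + 2 - (k + 1) = m + 1 := by omega
  rw [hsub]
  have hk1 : (0 : ℝ) < (k : ℝ) + 1 := by positivity
  have hm1 : (0 : ℝ) < (m : ℝ) + 1 := by positivity
  have gidx1 : k + 1 + 1 = k + 2 := rfl
  have gidx2 : k + 1 - 1 = k := rfl
  rw [gidx1, gidx2]
  push_cast
  have hx : (1 : ℝ) + 1 / ((k : ℝ) + 1) = ((k : ℝ) + 2) / ((k : ℝ) + 1) := by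
    field_simp; ring
  have hy : (1 : ℝ) + 1 / ((m : ℝ) + 1) = ((m : ℝ) + 2) / ((m : ℝ) + 1) := by
    field_simp; ring
  rw [hx, hy, div_mul_div_comm, div_mul_eq_mul_div, div_le_iff₀ (by positivity)]
  nlinarith [h3]
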